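/- With the notation above, the lattice Y_{w,v} is also generated by the family (t₁⋯t_{i−1}(α^∨_{w,v,i}))_{1≤i≤r}, where y = (t₁,…,t_r) is any sequence with v ≤ y ≤ w. -/

import Mathlib

/-! Setting as in the companion statements: `G` is a connected reductive group with
maximal torus `T`, Weyl group `W` with simple reflections `S`, and cocharacter lattice
`Y = Y(T)`.  A sequence `w = (s₁, …, s_r)` of elements of `S̄ = S ∪ {1}` is modelled by
`ℤ`-linear endomorphisms `s i` of `Y` satisfying the reflection identity
`s i x - x ∈ ℤ • α i` (`α i` the coroot of the `i`-th entry, `0` for a trivial entry);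
subsequences `v ≤ y ≤ w` are Boolean masks (`true` = entry of `w`, `false` = `1`). -/

namespace DLStmt3

variable {Y : Type*} [AddCommGroup Y] [Module ℤ Y] {r : ℕ}

/-- The `i`-th entry of the masked sequence: `s i` if the mask is `true`, `1` otherwise. -/
def entry (s : Fin r → Module.End ℤ Y) (b : Fin r → Bool) (i : Fin r) : Module.End ℤ Y :=
  if b i then s i else 1

/-- The partial product `s₁ ⋯ s_{i-1}` of the masked sequence (first `i` entries). -/
def prefixProd (s : Fin r → Module.End ℤ Y) (b : Fin r → Bool) (i : Fin r) :
    Module.End ℤ Y :=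
  ((List.ofFn (entry s b)).take i).prod

/-- The product `s₁ ⋯ s_r` of the masked sequence, i.e. the action of the corresponding
Weyl group element on `Y(T)`. -/
def seqProd (s : Fin r → Module.End ℤ Y) (b : Fin r → Bool) : Module.End ℤ Y :=
  (List.ofFn (entry s b)).prod

/-- `α^∨_{w,v,i}`: the coroot `α i` if the `i`-th entries of the two masked sequences
differ, and `0` otherwise. -/
def alphaD (α : Fin r → Y) (bw bv : Fin r → Bool) (i : Fin r) : Y :=
  if bw i = bv i then 0 else α i

/-- `β^∨_{w,v,i} = s₁ ⋯ s_{i-1} (α^∨_{w,v,i})`. -/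
def betaD (s : Fin r → Module.End ℤ Y) (α : Fin r → Y) (bw bv : Fin r → Bool)
    (i : Fin r) : Y :=
  prefixProd s bw i (alphaD α bw bv i)

/-- The sublattice `Y_{w,v} ⊆ Y(T)` generated by the `β^∨_{w,v,i}`. -/
def latt (s : Fin r → Module.End ℤ Y) (α : Fin r → Y) (bw bv : Fin r → Bool) :
    Submodule ℤ Y :=
  Submodule.span ℤ (Set.range (betaD s α bw bv))

/-- With the notation above, the lattice `Y_{w,v}` is also generated by the family
`(t₁⋯t_{i−1}(α^∨_{w,v,i}))_{1≤i≤r}`, where `y = (t₁,…,t_r)` is any sequence with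
`v ≤ y ≤ w`. -/
theorem statement3 (s : Fin r → Module.End ℤ Y) (α : Fin r → Y)
    (hrefl : ∀ (i : Fin r) (x : Y), ∃ n : ℤ, s i x - x = n • α i)
    (hα0 : ∀ i : Fin r, s i = 1 → α i = 0)
    (bv bY : Fin r → Bool) (hvy : ∀ i, bv i ≤ bY i) :
    latt s α (fun _ => true) bv =
      Submodule.span ℤ
        (Set.range fun i : Fin r =>
          prefixProd s bY i (alphaD α (fun _ => true) bv i)) := by
  classical
  set tw : Fin r → Bool := fun _ => true with htw
  set β := betaD s α tw bv with hβ
  set g : Fin r → Y := fun i => prefixProd s bY i (alphaD α tw bv i) with hg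
  set P : (Fin r → Bool) → ℕ → Module.End ℤ Y :=
    fun b n => ((List.ofFn (entry s b)).take n).prod with hP
  have hpre : ∀ (b : Fin r → Bool) (i : Fin r), prefixProd s b i = P b i.val :=
    fun _ _ => rfl
  have hstep : ∀ (b : Fin r → Bool) (n : ℕ) (h : n < r),
      P b (n + 1) = P b n * entry s b ⟨n, h⟩ := by
    intro b n h
    simp only [hP]
    rw [List.prod_take_succ _ n (by simpa using h)]
    congr 1
    simp [List.get_ofFn]
  have hstep' : ∀ (b : Fin r → Bool) (n : ℕ), r ≤ n → P b (n + 1) = P b n := by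
    intro b n h
    simp only [hP]
    rw [List.take_of_length_le (by simp; omega),
        List.take_of_length_le (by simpa using h)]
  have hαv : ∀ i : Fin r, bY i = false → alphaD α tw bv i = α i := by
    intro i hi
    have h1 := hvy i
    rw [hi] at h1
    have hbv : bv i = false := by
      cases h : bv i
      · rfl
      · rw [h] at h1; exact absurd h1 (by decide)
    simp [alphaD, htw, hbv]
  have hdiff : ∀ (n : ℕ) (x : Y),
      P tw n x - P bY n x ∈
        Submodule.span ℤ (β '' {j : Fin r | j.val < n}) := by
    intro n
    induction n with
    | zero => intro x; simp [hP]
    | succ n ih =>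
      intro x
      have hmono : Submodule.span ℤ (β '' {j : Fin r | j.val < n}) ≤
          Submodule.span ℤ (β '' {j : Fin r | j.val < n + 1}) :=
        Submodule.span_mono (Set.image_mono (fun j hj => Nat.lt_succ_of_lt hj))
      by_cases h : n < r
      · set i : Fin r := ⟨n, h⟩ with hi
        have hwtrue : entry s tw i = s i := by simp [entry, htw]
        have h1 : P tw (n + 1) x = P tw n (s i x) := by
          rw [hstep tw n h, hwtrue]; rfl
        by_cases hb : bY i = true
        · have h2 : P bY (n + 1) x = P bY n (s i x) := by
            rw [hstep bY n h]
            have : entry s bY i = s i := by simp [entry, hb]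
            rw [this]; rfl
          rw [h1, h2]
          exact hmono (ih (s i x))
        · have hb' : bY i = false := by simpa using hb
          have h2 : P bY (n + 1) x = P bY n x := by
            rw [hstep bY n h]
            have : entry s bY i = 1 := by simp [entry, hb']
            rw [this, mul_one]
          rw [h1, h2]
          obtain ⟨m, hm⟩ := hrefl i x
          have heq : P tw n (s i x) - P bY n x
              = m • (P tw n (α i)) + (P tw n x - P bY n x) := by
            have hh : P tw n (s i x) - P tw n x = m • P tw n (α i) := by
              rw [← map_sub, hm, map_zsmul]
            rw [← hh]; abel
          rw [heq]
          refine Submodule.add_mem _ (zsmul_mem ?_ m) (hmono (ih x))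
          apply Submodule.subset_span
          refine ⟨i, by simp [hi], ?_⟩
          rw [hβ]
          simp only [betaD, hαv i hb', hpre]; rfl
      · rw [hstep' tw n (le_of_not_gt h), hstep' bY n (le_of_not_gt h)]
        exact hmono (ih x)
  have hβg : ∀ i : Fin r, β i = g i +
      (P tw i.val (alphaD α tw bv i) - P bY i.val (alphaD α tw bv i)) := by
    intro i
    rw [hβ, hg]
    simp only [betaD, hpre]
    abel
  apply le_antisymm
  · have key : ∀ (n : ℕ) (j : Fin r), j.val < n →
        β j ∈ Submodule.span ℤ (Set.range g) := by
      intro n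
      induction n with
      | zero => intro j hj; omega
      | succ n ih =>
        intro j hj
        rw [hβg j]
        refine Submodule.add_mem _ (Submodule.subset_span ⟨j, rfl⟩) ?_
        refine Submodule.span_le.mpr ?_ (hdiff j.val (alphaD α tw bv j))
        rintro y ⟨k, hk, rfl⟩
        simp only [Set.mem_setOf_eq] at hk
        exact ih k (by omega)
    rw [latt, Submodule.span_le]
    rintro _ ⟨i, rfl⟩
    exact key r i i.isLt
  · rw [Submodule.span_le]
    rintro _ ⟨i, rfl⟩
    have : g i = β i -
        (P tw i.val (alphaD α tw bv i) - P bY i.val (alphaD α tw bv i)) := by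
      rw [hβg i]; abel
    rw [latt, this]
    refine Submodule.sub_mem _ (Submodule.subset_span ⟨i, rfl⟩) ?_
    exact Submodule.span_mono (Set.image_subset_range _ _)
      (hdiff i.val (alphaD α tw bv i))

end DLStmt3
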